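/- Let τ = (1,n+1)(2,n+2)⋯(n,2n) ∈ S_{2n}. If σ ∈ S_{2n} satisfies τστ⁻¹ = σ⁻¹, then for every cycle c in the cycle decomposition of σ, either there is a different cycle c' of σ with c' = τc⁻¹τ, or c has even length 2k and has the form (u₁ … u_k τ(u_k) … τ(u₁)). -/

import Mathlib

set_option linter.unnecessarySeqFocus false

open Equiv Equiv.Perm

/-- The fixed-point-free involution `τ = (1,n+1)(2,n+2)⋯(n,2n)` of `Fin (2n)`,
sending `i ↦ i+n` for `i ≤ n` and `i ↦ i−n` for `i > n` (0-indexed). -/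
def tau (n : ℕ) : Equiv.Perm (Fin (2 * n)) where
  toFun i := if h : (i : ℕ) < n then ⟨i + n, by omega⟩ else ⟨i - n, by have := i.isLt; omega⟩
  invFun i := if h : (i : ℕ) < n then ⟨i + n, by omega⟩ else ⟨i - n, by have := i.isLt; omega⟩
  left_inv := by
    rintro ⟨v, hv⟩
    by_cases h : v < n <;> simp [h] <;> split <;> (try omega) <;> (apply Fin.ext; simp <;> omega)
  right_inv := by
    rintro ⟨v, hv⟩
    by_cases h : v < n <;> simp [h] <;> split <;> (try omega) <;> (apply Fin.ext; simp <;> omega)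

lemma tau_inv (n : ℕ) : (tau n)⁻¹ = tau n := rfl

lemma tau_mul_self (n : ℕ) : tau n * tau n = 1 := by
  have := inv_mul_cancel (tau n); rwa [tau_inv] at this

lemma tau_apply_apply (n : ℕ) (x : Fin (2*n)) : tau n (tau n x) = x := by
  rw [← Equiv.Perm.mul_apply, tau_mul_self, Equiv.Perm.one_apply]

lemma tau_ne (n : ℕ) (x : Fin (2*n)) : tau n x ≠ x := by
  have hx := x.isLt
  intro hEq
  have : ((tau n x : Fin (2*n)) : ℕ) = (x : ℕ) := congrArg Fin.val hEq
  simp only [tau, Equiv.coe_fn_mk] at this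
  split at this <;> simp only [Fin.val_mk] at this <;> omega

/-- If `τστ⁻¹ = σ⁻¹`, then every cycle `c` of `σ` either has a distinct `τ`-symmetric
partner cycle `c' = τc⁻¹τ` in the cycle decomposition of `σ`, or `c` is
`τ`-self-symmetric: it has even length `2k` and the form `(u₁ … u_k τ(u_k) … τ(u₁))`. -/
theorem twisted_centralizer_cycles (n : ℕ) (σ : Equiv.Perm (Fin (2 * n)))
    (h : tau n * σ * (tau n)⁻¹ = σ⁻¹) :
    ∀ c ∈ σ.cycleFactorsFinset,
      (∃ c' ∈ σ.cycleFactorsFinset, c' ≠ c ∧ c' = tau n * c⁻¹ * tau n) ∨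
      (∃ (k : ℕ) (l : List (Fin (2 * n))), 0 < k ∧ l.length = k ∧
        (l ++ l.reverse.map (tau n)).Nodup ∧
        c.support.card = 2 * k ∧
        c = (l ++ l.reverse.map (tau n)).formPerm) := by
  intro c hc
  obtain ⟨hcyc, hagree⟩ := mem_cycleFactorsFinset_iff.mp hc
  rw [tau_inv] at h
  have hinv : ∀ b ∈ c.support, σ⁻¹ b = c⁻¹ b := by
    intro b hb
    have hb' : c⁻¹ b ∈ c.support := by
      rwa [← support_inv c, apply_mem_support, support_inv]
    have h1 : σ (c⁻¹ b) = b := by rw [← hagree _ hb', (show ∀ (f : Perm (Fin (2*n))) y, f (f⁻¹ y) = y from fun f y => f.apply_symm_apply y)]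
    exact inv_eq_iff_eq.mpr h1.symm
  have h2 : σ * tau n = tau n * σ⁻¹ := by
    rw [← h, ← mul_assoc, ← mul_assoc, tau_mul_self, one_mul]
  have hστ : ∀ y, σ (tau n y) = tau n (σ⁻¹ y) := by
    intro y
    simpa [Equiv.Perm.mul_apply] using DFunLike.congr_fun h2 y
  by_cases hsym : tau n * c⁻¹ * tau n = c
  · right
    have hconj : tau n * c * tau n = c⁻¹ := by
      have h6 := congrArg Inv.inv hsym
      rw [mul_inv_rev, mul_inv_rev, tau_inv, inv_inv] at h6
      rw [mul_assoc]; exact h6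
    have hgj : ∀ (j : ℕ) (y : Fin (2*n)), tau n ((c^j) y) = (c^j)⁻¹ (tau n y) := by
      intro j y
      have hcj : tau n * c^j * tau n = (c^j)⁻¹ := by
        have h3 : tau n * c^j * (tau n)⁻¹ = (tau n * c * (tau n)⁻¹)^j := conj_pow.symm
        rw [tau_inv] at h3
        rw [h3, hconj, inv_pow]
      have hcj' : tau n * c^j = (c^j)⁻¹ * tau n := by
        calc tau n * c^j = tau n * c^j * tau n * tau n := by
              rw [mul_assoc (tau n * c^j), tau_mul_self, mul_one]
          _ = (c^j)⁻¹ * tau n := by rw [hcj]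
      simpa [Equiv.Perm.mul_apply] using DFunLike.congr_fun hcj' y
    obtain ⟨x, hx⟩ : ∃ x, x ∈ c.support :=
      Finset.card_pos.mp (by have := hcyc.two_le_card_support; omega)
    have hxne : c x ≠ x := mem_support.mp hx
    have hτx : tau n x ∈ c.support := by
      rw [mem_support]
      have hcx : c (tau n x) = tau n (c⁻¹ x) := by
        conv_lhs => rw [← hsym]
        simp [Equiv.Perm.mul_apply, tau_apply_apply]
      rw [hcx]
      intro hEq
      have h4 := (tau n).injective hEq
      exact hxne (inv_eq_iff_eq.mp h4).symm
    obtain ⟨t, -, ht⟩ :=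
      (hcyc.sameCycle hxne (mem_support.mp hτx)).exists_pow_eq_of_mem_support hx
    have hco : c.IsCycleOn ↑c.support := by
      rw [coe_support_eq_set_support]; exact hcyc.isCycleOn
    have hmod : ∀ a b : ℕ, (c^a) x = (c^b) x ↔ a ≡ b [MOD c.support.card] :=
      fun a b => hco.pow_apply_eq_pow_apply hx
    have htne : ∀ j : ℕ, ¬ (2*j ≡ t [MOD c.support.card]) := by
      intro j hj
      have hj' : (j+j) ≡ t [MOD c.support.card] := by
        rw [← two_mul]; exact hj
      have h1 : (c^(j+j)) x = (c^t) x := (hmod _ _).mpr hj'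
      have h5 : tau n ((c^j) x) = (c^j) x := by
        rw [hgj, ← ht, ← h1, pow_add, Equiv.Perm.mul_apply, (show ∀ (f : Perm (Fin (2*n))) y, f⁻¹ (f y) = y from fun f y => f.symm_apply_apply y)]
      exact tau_ne n _ h5
    obtain ⟨k, hk, hk0⟩ : ∃ k, c.support.card = 2*k ∧ 0 < k := by
      rcases Nat.even_or_odd c.support.card with he | ho
      · obtain ⟨k, hkk⟩ := he
        have := hcyc.two_le_card_support
        exact ⟨k, by omega, by omega⟩
      · exfalso
        obtain ⟨r, hr⟩ := ho
        apply htne ((r+1)*t)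
        have he : 2*((r+1)*t) = (c.support.card)*t + t := by rw [hr]; ring
        rw [he]
        exact ((Nat.modEq_iff_dvd' (Nat.le_add_left _ _)).mpr ⟨t, by omega⟩).symm
    obtain ⟨u, hu⟩ : ∃ u, t = 2*u + 1 := by
      rcases Nat.even_or_odd t with he | ho
      · exfalso
        obtain ⟨v, hv⟩ := he
        apply htne v
        have : 2*v = t := by omega
        rw [this]
      · obtain ⟨v, hv⟩ := ho; exact ⟨v, hv⟩
    set x' : Fin (2*n) := (c^(u+1)) x with hx'def
    have hx'supp : x' ∈ c.support := pow_apply_mem_support.mpr hx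
    have hτx' : tau n x' = c⁻¹ x' := by
      have e1 : tau n x' = (c^u) x := by
        rw [hx'def, hgj, ← ht, hu, show 2*u+1 = (u+1)+u from by omega,
          pow_add c (u+1) u, Equiv.Perm.mul_apply, (show ∀ (f : Perm (Fin (2*n))) y, f⁻¹ (f y) = y from fun f y => f.symm_apply_apply y)]
      have e2 : c⁻¹ x' = (c^u) x := by
        rw [hx'def, pow_succ', Equiv.Perm.mul_apply, (show ∀ (f : Perm (Fin (2*n))) y, f⁻¹ (f y) = y from fun f y => f.symm_apply_apply y)]
      rw [e1, e2]
    have hcx' : c.cycleOf x' = c := hcyc.cycleOf_eq (mem_support.mp hx'supp)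
    have h2k : (c^(2*k)) x' = x' := by
      rw [← hk]; exact hco.pow_card_apply hx'supp
    have key : ∀ e i : ℕ, e + 1 + i = 2*k → tau n ((c^e) x') = (c^i) x' := by
      intro e i he
      have hperm : c * c^e * c^i = c^(2*k) := by
        rw [← pow_succ', ← pow_add, he]
      rw [hgj, hτx', inv_eq_iff_eq, inv_eq_iff_eq]
      calc x' = (c^(2*k)) x' := h2k.symm
        _ = c ((c^e) ((c^i) x')) := by rw [← hperm]; simp [Equiv.Perm.mul_apply]
    set L : List (Fin (2*n)) := c.toList x' with hLdef
    have hLlen : L.length = 2*k := by rw [hLdef, length_toList, hcx', hk]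
    have hLget : ∀ (i : ℕ) (hi : i < L.length), L[i] = (c^i) x' := by
      intro i hi
      simp [hLdef, toList, Equiv.Perm.iterate_eq_pow]
    have hlen : (L.take k).length = k := by
      rw [List.length_take, hLlen]; omega
    have hmain : L.take k ++ (L.take k).reverse.map (tau n) = L := by
      apply List.ext_getElem
      · simp [hlen, hLlen]; omega
      · intro i h1 hL2
        by_cases hik : i < k
        · rw [List.getElem_append_left (by rw [hlen]; exact hik)]
          rw [List.getElem_take]
        · have hik' : k ≤ i := le_of_not_gt hik
          have hi2k : i < 2*k := hLlen ▸ hL2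
          rw [List.getElem_append_right (by rw [hlen]; exact hik')]
          rw [List.getElem_map, List.getElem_reverse, List.getElem_take]
          rw [hLget _ (by simp [hlen, hLlen]; omega), hLget i hL2]
          apply key
          simp [hlen]
          omega
    refine ⟨k, L.take k, hk0, hlen, ?_, by rw [hk], ?_⟩
    · rw [hmain]; exact nodup_toList c x'
    · rw [hmain, hLdef, formPerm_toList, hcx']
  · left
    refine ⟨tau n * c⁻¹ * tau n, ?_, hsym, rfl⟩
    rw [mem_cycleFactorsFinset_iff]
    have hform : tau n * c⁻¹ * tau n = tau n * c⁻¹ * (tau n)⁻¹ := by rw [tau_inv]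
    constructor
    · rw [hform]; exact hcyc.inv.conj
    · intro a ha
      rw [hform, support_conj, Finset.mem_map] at ha
      obtain ⟨b, hb, rfl⟩ := ha
      rw [support_inv] at hb
      simp only [Equiv.coe_toEmbedding, Equiv.Perm.mul_apply]
      rw [tau_apply_apply, hστ, hinv b hb]
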